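/- Suppose ψ : ℕ → ℝ satisfies ψ(n) > 0 for all large n and 2n/(ψ(n) e^{ψ(n)}) → 0 as n → ∞. Then for A uniform on {±1}^n, P[μ(A) ≤ √(2nψ(n))] → 1 as n → ∞. -/

import Mathlib

open scoped Classical

/-- The `j`-th entry (as `±1 : ℝ`) of the binary sequence encoded by `b`. -/
noncomputable def rad {n : ℕ} (b : Fin n → Bool) (j : ℕ) : ℝ :=
  if h : j < n then (if b ⟨j, h⟩ then 1 else -1) else 0

/-- The aperiodic autocorrelation at shift `k`. -/
noncomputable def autocorr {n : ℕ} (b : Fin n → Bool) (k : ℕ) : ℝ :=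
  ∑ j ∈ Finset.range (n - k), rad b j * rad b (j + k)

/-- The peak sidelobe level `μ(A) = max_{1 ≤ k ≤ n-1} |c_k|`. -/
noncomputable def psl {n : ℕ} (b : Fin n → Bool) : ℝ :=
  ⨆ k ∈ Finset.Icc 1 (n - 1), |autocorr b k|

lemma rad_snoc_lt {m : ℕ} (b : Fin m → Bool) (x : Bool) {j : ℕ} (hj : j < m) :
    rad (Fin.snoc b x : Fin (m+1) → Bool) j = rad b j := by
  have h1 : j < m + 1 := Nat.lt_succ_of_lt hj
  simp only [rad, dif_pos h1, dif_pos hj]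
  have : (⟨j, h1⟩ : Fin (m+1)) = Fin.castSucc ⟨j, hj⟩ := rfl
  rw [this, Fin.snoc_castSucc]

lemma rad_snoc_last {m : ℕ} (b : Fin m → Bool) (x : Bool) :
    rad (Fin.snoc b x : Fin (m+1) → Bool) m = if x then 1 else -1 := by
  have h1 : m < m + 1 := Nat.lt_succ_self m
  simp only [rad, dif_pos h1]
  have : (⟨m, h1⟩ : Fin (m+1)) = Fin.last m := rfl
  rw [this, Fin.snoc_last]

lemma rad_abs_le {n : ℕ} (b : Fin n → Bool) (j : ℕ) : |rad b j| ≤ 1 := by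
  unfold rad; split_ifs <;> norm_num

lemma rad_sq {n : ℕ} (b : Fin n → Bool) {j : ℕ} (hj : j < n) :
    rad b j = 1 ∨ rad b j = -1 := by
  unfold rad; rw [dif_pos hj]; split_ifs <;> simp

lemma autocorr_snoc {m k : ℕ} (hk : 1 ≤ k) (hkm : k ≤ m) (b : Fin m → Bool) (x : Bool) :
    autocorr (Fin.snoc b x : Fin (m+1) → Bool) k
      = autocorr b k + rad b (m - k) * (if x then (1:ℝ) else -1) := by
  unfold autocorr
  have hm : m + 1 - k = (m - k) + 1 := by omega
  rw [hm, Finset.sum_range_succ]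
  congr 1
  · apply Finset.sum_congr rfl
    intro j hj
    rw [Finset.mem_range] at hj
    rw [rad_snoc_lt b x (by omega), rad_snoc_lt b x (by omega)]
  · have : m - k + k = m := by omega
    rw [this, rad_snoc_lt b x (by omega), rad_snoc_last]

lemma mgf_eq (l : ℝ) : ∀ (n k : ℕ), 1 ≤ k →
    ∑ b : Fin n → Bool, Real.exp (l * autocorr b k)
      = 2 ^ n * Real.cosh l ^ (n - k) := by
  intro n
  induction n with
  | zero =>
    intro k hk
    simp [autocorr]
  | succ m ih =>
    intro k hk
    rcases le_or_gt k m with hkm | hkm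
    · rw [← (Fin.snocEquiv (fun _ => Bool)).sum_comp
        (fun b => Real.exp (l * autocorr b k))]
      rw [Fintype.sum_prod_type]
      have : ∀ p : Bool × (Fin m → Bool),
          (Fin.snocEquiv (fun _ => Bool)) p = Fin.snoc p.2 p.1 := fun p => rfl
      simp only [this]
      have key : ∀ (b : Fin m → Bool),
          ∑ x : Bool, Real.exp (l * autocorr (Fin.snoc b x : Fin (m+1) → Bool) k)
            = Real.exp (l * autocorr b k) * (2 * Real.cosh l) := by
        intro b
        have hmk : m - k < m := by omega
        rcases rad_sq b hmk with hr | hr <;>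
        · simp only [Fintype.sum_bool, autocorr_snoc hk hkm, hr, if_true, reduceIte]
          rw [show (if false = true then (1:ℝ) else -1) = -1 from rfl]
          rw [Real.cosh_eq, mul_add, mul_add, Real.exp_add, Real.exp_add]
          norm_num
          ring
      rw [Finset.sum_comm]
      simp only [key]
      rw [← Finset.sum_mul, ih k hk]
      have hmk1 : m + 1 - k = (m - k) + 1 := by omega
      rw [hmk1]; ring
    · -- k > m : autocorr over range (m+1-k) ... m+1-k ≤ 0 or = 0? k ≥ m+1 means m+1-k=0
      have h0 : m + 1 - k = 0 := by omega
      have : ∀ b : Fin (m+1) → Bool, autocorr b k = 0 := by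
        intro b; unfold autocorr; rw [h0]; simp
      simp [this, h0]

lemma chernoff_count {n k : ℕ} (hk : 1 ≤ k) (hkn : k < n) {t : ℝ} (ht : 0 < t) :
    ((Finset.univ.filter fun b : Fin n → Bool => t < |autocorr b k|).card : ℝ)
      ≤ 2 ^ n * (2 * Real.exp (-(t ^ 2) / (2 * ((n - k : ℕ) : ℝ)))) := by
  set m : ℕ := n - k with hm
  have hm0 : 0 < m := by omega
  have hmR : (0:ℝ) < (m:ℝ) := by exact_mod_cast hm0
  set l : ℝ := t / m with hl
  have hl0 : 0 < l := div_pos ht hmR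
  have key : ∀ (l' : ℝ) (P : (Fin n → Bool) → Prop),
      (∀ b, P b → l * t ≤ l' * autocorr b k) →
      ((Finset.univ.filter fun b => P b).card : ℝ) * Real.exp (l * t)
        ≤ 2 ^ n * Real.cosh l' ^ m := by
    intro l' P hP
    calc ((Finset.univ.filter fun b => P b).card : ℝ) * Real.exp (l * t)
        = ∑ _b ∈ Finset.univ.filter fun b => P b, Real.exp (l * t) := by
          rw [Finset.sum_const, nsmul_eq_mul]
      _ ≤ ∑ b ∈ Finset.univ.filter fun b => P b, Real.exp (l' * autocorr b k) := by
          apply Finset.sum_le_sum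
          intro b hb
          rw [Finset.mem_filter] at hb
          exact Real.exp_le_exp.2 (hP b hb.2)
      _ ≤ ∑ b : Fin n → Bool, Real.exp (l' * autocorr b k) := by
          apply Finset.sum_le_sum_of_subset_of_nonneg (Finset.filter_subset _ _)
          intro b _ _; positivity
      _ = 2 ^ n * Real.cosh l' ^ m := mgf_eq l' n k hk
  have hbound : 2 ^ n * Real.cosh l ^ m / Real.exp (l * t)
      ≤ (2:ℝ) ^ n * Real.exp (-(t ^ 2) / (2 * (m : ℝ))) := by
    rw [div_le_iff₀ (Real.exp_pos _)]
    have h1 : Real.cosh l ^ m ≤ Real.exp ((m : ℝ) * (l ^ 2 / 2)) := by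
      rw [mul_comm ((m:ℝ)) _, Real.exp_mul _ (m:ℝ)]
      rw [Real.rpow_natCast]
      exact pow_le_pow_left₀ (by positivity) (Real.cosh_le_exp_half_sq l) m
    have h2 : (-(t ^ 2) / (2 * (m : ℝ))) + l * t = (m : ℝ) * (l ^ 2 / 2) := by
      rw [hl]; field_simp; ring
    calc (2:ℝ) ^ n * Real.cosh l ^ m ≤ 2 ^ n * Real.exp ((m : ℝ) * (l ^ 2 / 2)) := by
          apply mul_le_mul_of_nonneg_left h1 (by positivity)
      _ = 2 ^ n * (Real.exp (-(t ^ 2) / (2 * (m : ℝ))) * Real.exp (l * t)) := by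
          rw [← Real.exp_add, h2]
      _ = 2 ^ n * Real.exp (-(t ^ 2) / (2 * (m : ℝ))) * Real.exp (l * t) := by ring
  have hsub : (Finset.univ.filter fun b : Fin n → Bool => t < |autocorr b k|)
      ⊆ (Finset.univ.filter fun b : Fin n → Bool => t < autocorr b k)
        ∪ (Finset.univ.filter fun b : Fin n → Bool => t < -autocorr b k) := by
    intro b hb
    rw [Finset.mem_filter] at hb
    rw [Finset.mem_union, Finset.mem_filter, Finset.mem_filter]
    rcases lt_abs.mp hb.2 with h | h
    · exact Or.inl ⟨Finset.mem_univ b, h⟩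
    · exact Or.inr ⟨Finset.mem_univ b, h⟩
  have c1 : ((Finset.univ.filter fun b : Fin n → Bool => t < autocorr b k).card : ℝ)
      ≤ 2 ^ n * Real.cosh l ^ m / Real.exp (l * t) := by
    rw [le_div_iff₀ (Real.exp_pos _)]
    exact key l _ (fun b hb => mul_le_mul_of_nonneg_left (le_of_lt hb) hl0.le)
  have c2 : ((Finset.univ.filter fun b : Fin n → Bool => t < -autocorr b k).card : ℝ)
      ≤ 2 ^ n * Real.cosh l ^ m / Real.exp (l * t) := by
    rw [le_div_iff₀ (Real.exp_pos _)]
    have := key (-l) _ (fun b (hb : t < -autocorr b k) => by nlinarith)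
    rwa [Real.cosh_neg] at this
  calc ((Finset.univ.filter fun b : Fin n → Bool => t < |autocorr b k|).card : ℝ)
      ≤ (((Finset.univ.filter fun b : Fin n → Bool => t < autocorr b k)
          ∪ (Finset.univ.filter fun b : Fin n → Bool => t < -autocorr b k)).card : ℝ) := by
        exact_mod_cast Finset.card_le_card hsub
    _ ≤ ((Finset.univ.filter fun b : Fin n → Bool => t < autocorr b k).card : ℝ)
        + ((Finset.univ.filter fun b : Fin n → Bool => t < -autocorr b k).card : ℝ) := by
        exact_mod_cast Finset.card_union_le _ _
    _ ≤ 2 * (2 ^ n * Real.cosh l ^ m / Real.exp (l * t)) := by linarith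
    _ ≤ 2 * (2 ^ n * Real.exp (-(t ^ 2) / (2 * (m : ℝ)))) := by linarith
    _ = 2 ^ n * (2 * Real.exp (-(t ^ 2) / (2 * ((n - k : ℕ) : ℝ)))) := by rw [← hm]; ring

lemma psl_le_of {n : ℕ} (b : Fin n → Bool) {t : ℝ} (ht : 0 ≤ t)
    (h : ∀ k ∈ Finset.Icc 1 (n - 1), |autocorr b k| ≤ t) : psl b ≤ t := by
  unfold psl
  exact Real.iSup_le (fun k => Real.iSup_le (fun hk => h k hk) ht) ht

lemma autocorr_abs_le {n : ℕ} (b : Fin n → Bool) (k : ℕ) :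
    |autocorr b k| ≤ ((n - k : ℕ) : ℝ) := by
  unfold autocorr
  calc |∑ j ∈ Finset.range (n - k), rad b j * rad b (j + k)|
      ≤ ∑ j ∈ Finset.range (n - k), |rad b j * rad b (j + k)| :=
        Finset.abs_sum_le_sum_abs _ _
    _ ≤ ∑ _j ∈ Finset.range (n - k), (1:ℝ) := by
        apply Finset.sum_le_sum
        intro j _
        rw [abs_mul]
        exact mul_le_one₀ (rad_abs_le b j) (abs_nonneg _) (rad_abs_le b (j + k))
    _ = ((n - k : ℕ) : ℝ) := by simp

lemma fail_bound {ψ : ℝ} {n : ℕ} (hn : 1 ≤ n) (hψ : 0 < ψ) :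
    ((Finset.univ.filter fun b : Fin n → Bool =>
        ¬ psl b ≤ Real.sqrt (2 * n * ψ)).card : ℝ) / 2 ^ n
      ≤ Real.exp 1 * (2 * n / (ψ * Real.exp ψ)) := by
  have hn0 : (0:ℝ) < n := by exact_mod_cast hn
  rcases le_or_gt ψ n with hψn | hψn
  · -- main case
    set t : ℝ := Real.sqrt (2 * n * ψ) with htdef
    have h2nψ : (0:ℝ) < 2 * n * ψ := by positivity
    have ht0 : 0 < t := Real.sqrt_pos.mpr h2nψ
    have ht2 : t ^ 2 = 2 * n * ψ := Real.sq_sqrt h2nψ.le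
    have hsub : (Finset.univ.filter fun b : Fin n → Bool => ¬ psl b ≤ t)
        ⊆ (Finset.Icc 1 (n - 1)).biUnion
            (fun k => Finset.univ.filter fun b : Fin n → Bool => t < |autocorr b k|) := by
      intro b hb
      rw [Finset.mem_filter] at hb
      rw [Finset.mem_biUnion]
      by_contra hc
      push_neg at hc
      apply hb.2
      apply psl_le_of b ht0.le
      intro k hk
      have := hc k hk
      rw [Finset.mem_filter] at this
      push_neg at this
      exact this (Finset.mem_univ b)
    set r : ℝ := Real.exp (-(ψ / n)) with hrdef
    have hr0 : 0 < r := Real.exp_pos _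
    have hr1 : r < 1 := by
      have : 0 < ψ / n := div_pos hψ hn0
      exact Real.exp_lt_one_iff.mpr (by linarith)
    have term_bound : ∀ k ∈ Finset.Icc 1 (n - 1),
        Real.exp (-(t ^ 2) / (2 * ((n - k : ℕ) : ℝ))) ≤ Real.exp (-ψ) * r ^ k := by
      intro k hk
      rw [Finset.mem_Icc] at hk
      have hk1 : 1 ≤ k := hk.1
      have hkn : k < n := by omega
      have hm : ((n - k : ℕ) : ℝ) = (n : ℝ) - k := by
        rw [Nat.cast_sub hkn.le]
      have hmR : (0:ℝ) < ((n - k : ℕ) : ℝ) := by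
        rw [hm]; have : (k:ℝ) < n := by exact_mod_cast hkn
        linarith
      rw [← Real.exp_nat_mul, ← Real.exp_add]
      apply Real.exp_le_exp.2
      rw [ht2]
      have hkR : (1:ℝ) ≤ (k:ℝ) := by exact_mod_cast hk1
      have hkRn : (k:ℝ) < n := by exact_mod_cast hkn
      rw [hm]
      have hne : (n:ℝ) ≠ 0 := ne_of_gt hn0
      rw [div_le_iff₀ (by linarith : (0:ℝ) < 2 * ((n:ℝ) - (k:ℝ)))]
      have hd : (ψ / n) * n = ψ := div_mul_cancel₀ ψ hne
      nlinarith [div_pos hψ hn0, sq_nonneg ((k:ℝ)), mul_pos hψ hn0,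
        mul_nonneg (div_pos hψ hn0).le (sq_nonneg ((k:ℝ)))]
    have h1r : 0 < 1 - r := by linarith
    have hgeom : ∑ k ∈ Finset.Icc 1 (n - 1), r ^ k ≤ 1 / (1 - r) := by
      have hsub2 : Finset.Icc 1 (n - 1) ⊆ Finset.range n := by
        intro k hk
        rw [Finset.mem_Icc] at hk
        rw [Finset.mem_range]
        omega
      calc ∑ k ∈ Finset.Icc 1 (n - 1), r ^ k ≤ ∑ k ∈ Finset.range n, r ^ k := by
            apply Finset.sum_le_sum_of_subset_of_nonneg hsub2
            intro k _ _; positivity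
        _ ≤ 1 / (1 - r) := by
            rw [le_div_iff₀ h1r]
            nlinarith [geom_sum_mul r n, pow_nonneg hr0.le n]
    have hlow : (ψ / n) * Real.exp (-1) ≤ 1 - r := by
      have hx1 : ψ / n ≤ 1 := by rw [div_le_one hn0]; exact hψn
      have hx0 : 0 < ψ / n := div_pos hψ hn0
      have step1 : (ψ / n) * Real.exp (-1) ≤ (ψ / n) * Real.exp (-(ψ / n)) :=
        mul_le_mul_of_nonneg_left (Real.exp_le_exp.2 (by linarith)) hx0.le
      have hprod : Real.exp (-(ψ / n)) * Real.exp (ψ / n) = 1 := by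
        rw [← Real.exp_add]; simp
      have step2 : (ψ / n) * Real.exp (-(ψ / n)) ≤ 1 - r := by
        rw [hrdef]
        nlinarith [Real.add_one_le_exp (ψ / n), Real.exp_pos (-(ψ / n))]
      linarith
    have hinv : 1 / (1 - r) ≤ Real.exp 1 * ((n : ℝ) / ψ) := by
      have hpos : 0 < (ψ / n) * Real.exp (-1) := by positivity
      calc 1 / (1 - r) ≤ 1 / ((ψ / n) * Real.exp (-1)) :=
            one_div_le_one_div_of_le hpos hlow
        _ = Real.exp 1 * ((n : ℝ) / ψ) := by
            rw [Real.exp_neg]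
            field_simp
    have hcard : ((Finset.univ.filter fun b : Fin n → Bool => ¬ psl b ≤ t).card : ℝ)
        ≤ ∑ k ∈ Finset.Icc 1 (n - 1),
            ((Finset.univ.filter fun b : Fin n → Bool => t < |autocorr b k|).card : ℝ) := by
      calc ((Finset.univ.filter fun b : Fin n → Bool => ¬ psl b ≤ t).card : ℝ)
          ≤ (((Finset.Icc 1 (n - 1)).biUnion
              (fun k => Finset.univ.filter fun b : Fin n → Bool => t < |autocorr b k|)).card : ℝ) := by
            exact_mod_cast Finset.card_le_card hsub
        _ ≤ _ := by exact_mod_cast Finset.card_biUnion_le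
    have hsum2 : ∑ k ∈ Finset.Icc 1 (n - 1),
          ((Finset.univ.filter fun b : Fin n → Bool => t < |autocorr b k|).card : ℝ)
        ≤ ∑ k ∈ Finset.Icc 1 (n - 1), (2:ℝ) ^ n * 2 * Real.exp (-ψ) * r ^ k := by
      apply Finset.sum_le_sum
      intro k hk
      have hk' := Finset.mem_Icc.mp hk
      have hk1 : 1 ≤ k := hk'.1
      have hkn : k < n := by omega
      calc ((Finset.univ.filter fun b : Fin n → Bool => t < |autocorr b k|).card : ℝ)
          ≤ 2 ^ n * (2 * Real.exp (-(t ^ 2) / (2 * ((n - k : ℕ) : ℝ)))) :=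
            chernoff_count hk1 hkn ht0
        _ ≤ 2 ^ n * (2 * (Real.exp (-ψ) * r ^ k)) := by
            have := term_bound k hk
            have h2n : (0:ℝ) ≤ 2 ^ n := by positivity
            nlinarith [Real.exp_pos (-(t ^ 2) / (2 * ((n - k : ℕ) : ℝ)))]
        _ = 2 ^ n * 2 * Real.exp (-ψ) * r ^ k := by ring
    have hfinal : ((Finset.univ.filter fun b : Fin n → Bool => ¬ psl b ≤ t).card : ℝ)
        ≤ 2 ^ n * (Real.exp 1 * (2 * n / (ψ * Real.exp ψ))) := by
      have e1 : ∑ k ∈ Finset.Icc 1 (n - 1), (2:ℝ) ^ n * 2 * Real.exp (-ψ) * r ^ k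
          = (2:ℝ) ^ n * 2 * Real.exp (-ψ) * ∑ k ∈ Finset.Icc 1 (n - 1), r ^ k := by
        rw [Finset.mul_sum]
      have e2 : (2:ℝ) ^ n * 2 * Real.exp (-ψ) * (∑ k ∈ Finset.Icc 1 (n - 1), r ^ k)
          ≤ (2:ℝ) ^ n * 2 * Real.exp (-ψ) * (1 / (1 - r)) := by
        apply mul_le_mul_of_nonneg_left hgeom (by positivity)
      have e3 : (2:ℝ) ^ n * 2 * Real.exp (-ψ) * (1 / (1 - r))
          ≤ (2:ℝ) ^ n * 2 * Real.exp (-ψ) * (Real.exp 1 * ((n : ℝ) / ψ)) := by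
        apply mul_le_mul_of_nonneg_left hinv (by positivity)
      have e4 : (2:ℝ) ^ n * 2 * Real.exp (-ψ) * (Real.exp 1 * ((n : ℝ) / ψ))
          = 2 ^ n * (Real.exp 1 * (2 * n / (ψ * Real.exp ψ))) := by
        rw [Real.exp_neg]
        field_simp
      linarith
    rw [div_le_iff₀ (by positivity : (0:ℝ) < 2 ^ n)]
    calc ((Finset.univ.filter fun b : Fin n → Bool => ¬ psl b ≤ t).card : ℝ)
        ≤ 2 ^ n * (Real.exp 1 * (2 * n / (ψ * Real.exp ψ))) := hfinal
      _ = Real.exp 1 * (2 * n / (ψ * Real.exp ψ)) * 2 ^ n := by ring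
  · -- trivial case : the failure set is empty
    have hall : ∀ b : Fin n → Bool, psl b ≤ Real.sqrt (2 * n * ψ) := by
      intro b
      apply psl_le_of b (Real.sqrt_nonneg _)
      intro k hk
      calc |autocorr b k| ≤ ((n - k : ℕ) : ℝ) := autocorr_abs_le b k
        _ ≤ (n : ℝ) := by exact_mod_cast Nat.cast_le.mpr (Nat.sub_le n k)
        _ ≤ Real.sqrt (2 * n * ψ) := by
            rw [Real.le_sqrt hn0.le]
            · nlinarith
            · nlinarith [mul_pos hn0 hψ]

    have : (Finset.univ.filter fun b : Fin n → Bool =>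
        ¬ psl b ≤ Real.sqrt (2 * n * ψ)) = ∅ := by
      rw [Finset.filter_eq_empty_iff]
      intro b _
      exact not_not.mpr (hall b)
    rw [this]
    simp only [Finset.card_empty, Nat.cast_zero, zero_div]
    apply mul_nonneg (Real.exp_pos 1).le
    apply div_nonneg (by positivity) (mul_nonneg hψ.le (Real.exp_pos ψ).le)

theorem stmt_18 (ψ : ℕ → ℝ) (h1 : ∀ᶠ n in Filter.atTop, 0 < ψ n)
    (h2 : Filter.Tendsto (fun n : ℕ => 2 * n / (ψ n * Real.exp (ψ n)))
      Filter.atTop (nhds 0)) :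
    Filter.Tendsto
      (fun n : ℕ =>
        ((Finset.univ.filter fun b : Fin n → Bool =>
            psl b ≤ Real.sqrt (2 * n * ψ n)).card : ℝ) / 2 ^ n)
      Filter.atTop (nhds 1) := by
  have hid : ∀ n : ℕ,
      ((Finset.univ.filter fun b : Fin n → Bool =>
          psl b ≤ Real.sqrt (2 * n * ψ n)).card : ℝ) / 2 ^ n
        = 1 - ((Finset.univ.filter fun b : Fin n → Bool =>
            ¬ psl b ≤ Real.sqrt (2 * n * ψ n)).card : ℝ) / 2 ^ n := by
    intro n
    have htot : (Finset.univ.filter fun b : Fin n → Bool =>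
          psl b ≤ Real.sqrt (2 * n * ψ n)).card
        + (Finset.univ.filter fun b : Fin n → Bool =>
          ¬ psl b ≤ Real.sqrt (2 * n * ψ n)).card = 2 ^ n := by
      rw [Finset.card_filter_add_card_filter_not]
      simp [Finset.card_univ]
    have h2n : (0:ℝ) < 2 ^ n := by positivity
    rw [eq_sub_iff_add_eq, ← add_div, div_eq_one_iff_eq h2n.ne']
    exact_mod_cast htot
  have hfail : Filter.Tendsto
      (fun n : ℕ => ((Finset.univ.filter fun b : Fin n → Bool =>
          ¬ psl b ≤ Real.sqrt (2 * n * ψ n)).card : ℝ) / 2 ^ n)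
      Filter.atTop (nhds 0) := by
    apply squeeze_zero'
    · filter_upwards with n
      positivity
    · filter_upwards [h1, Filter.eventually_ge_atTop 1] with n hψn hn
      exact fail_bound hn hψn
    · have := h2.const_mul (Real.exp 1)
      simpa using this
  have := hfail.const_sub 1
  simp only [sub_zero] at this
  convert this using 1
  exact funext hid
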